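/- Let s ∈ (0,1), κ > 0, N(κ) = ⌈π²/(4(1-s)κ²)⌉, λ₀ > 0 and λ ≥ λ₀. Then the upper truncation tail of the Balakrishnan integral satisfies (2 sin(πs)/π) ∫_{N(κ)κ}^{+∞} e^{2sy}(1 + e^{2y}λ)^{-1} dy ≤ (sin(πs)/(π(1-s)λ₀)) e^{-π²/(2κ)}. -/

import Mathlib

open Real MeasureTheory

lemma integral_exp_neg_mul_Ioi' {b : ℝ} (hb : 0 < b) (a : ℝ) :
    ∫ x in Set.Ioi a, Real.exp (-b * x) = Real.exp (-b * a) / b := by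
  have hderiv : ∀ x ∈ Set.Ici a, HasDerivAt (fun x => -Real.exp (-b * x) / b)
      (Real.exp (-b * x)) x := by
    intro x _
    simpa [hb.ne'] using ((hasDerivAt_id x).const_mul (-b)).exp.neg.div_const b
  have htend : Filter.Tendsto (fun x => -Real.exp (-b * x) / b) Filter.atTop (nhds (-0 / b)) := by
    refine Filter.Tendsto.div_const (Filter.Tendsto.neg ?_) _
    exact Real.tendsto_exp_atBot.comp (Filter.tendsto_id.const_mul_atTop_of_neg (by linarith))
  have := MeasureTheory.integral_Ioi_of_hasDerivAt_of_tendsto' hderiv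
    ((exp_neg_integrableOn_Ioi a hb)) htend
  rw [this]; ring

theorem balakrishnan_upper_tail_bound
    (s : ℝ) (hs : s ∈ Set.Ioo (0 : ℝ) 1) (κ : ℝ) (hκ : 0 < κ)
    (lam₀ : ℝ) (hlam₀ : 0 < lam₀) (lam : ℝ) (hlam : lam₀ ≤ lam) :
    (2 * Real.sin (Real.pi * s) / Real.pi) *
        ∫ y in Set.Ici (((⌈Real.pi ^ 2 / (4 * (1 - s) * κ ^ 2)⌉ : ℤ) : ℝ) * κ),
          Real.exp (2 * s * y) * (1 + Real.exp (2 * y) * lam)⁻¹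
      ≤ (Real.sin (Real.pi * s) / (Real.pi * (1 - s) * lam₀)) * Real.exp (-Real.pi ^ 2 / (2 * κ)) := by
  obtain ⟨hs0, hs1⟩ := hs
  set a : ℝ := ((⌈Real.pi ^ 2 / (4 * (1 - s) * κ ^ 2)⌉ : ℤ) : ℝ) * κ with ha
  have hlam' : 0 < lam := lt_of_lt_of_le hlam₀ hlam
  have h1s : 0 < 1 - s := by linarith
  have hb : (0:ℝ) < 2 * (1 - s) := by linarith
  have hsin : 0 < Real.sin (Real.pi * s) :=
    Real.sin_pos_of_pos_of_lt_pi (by positivity)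
      (by nlinarith [Real.pi_pos])
  -- pointwise bound
  have hpt : ∀ y, Real.exp (2 * s * y) * (1 + Real.exp (2 * y) * lam)⁻¹
      ≤ Real.exp (-(2 * (1 - s)) * y) / lam₀ := by
    intro y
    have he : (0:ℝ) < Real.exp (2 * y) * lam := by positivity
    have h2 : (1 + Real.exp (2 * y) * lam)⁻¹ ≤ (Real.exp (2 * y) * lam₀)⁻¹ := by
      apply inv_anti₀ (by positivity)
      nlinarith [Real.exp_pos (2 * y)]
    calc Real.exp (2 * s * y) * (1 + Real.exp (2 * y) * lam)⁻¹
        ≤ Real.exp (2 * s * y) * (Real.exp (2 * y) * lam₀)⁻¹ := by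
          exact mul_le_mul_of_nonneg_left h2 (Real.exp_pos _).le
      _ = Real.exp (-(2 * (1 - s)) * y) / lam₀ := by
          rw [mul_inv, ← Real.exp_neg, ← mul_assoc, ← Real.exp_add]
          rw [div_eq_mul_inv]; ring_nf
  -- integrability of dominating function
  have hgint : IntegrableOn (fun y => Real.exp (-(2 * (1 - s)) * y) / lam₀) (Set.Ici a) := by
    rw [integrableOn_Ici_iff_integrableOn_Ioi]
    exact ((exp_neg_integrableOn_Ioi a hb).div_const lam₀)
  -- integrability of f
  have hfint : IntegrableOn (fun y => Real.exp (2 * s * y) * (1 + Real.exp (2 * y) * lam)⁻¹)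
      (Set.Ici a) := by
    refine hgint.integrable.mono' ?_ ?_
    · apply Continuous.aestronglyMeasurable
      fun_prop (disch := intro x; positivity)
    · filter_upwards with y
      rw [Real.norm_eq_abs, abs_of_nonneg (by positivity)]
      exact hpt y
  have hmono : ∫ y in Set.Ici a, Real.exp (2 * s * y) * (1 + Real.exp (2 * y) * lam)⁻¹
      ≤ ∫ y in Set.Ici a, Real.exp (-(2 * (1 - s)) * y) / lam₀ := by
    refine MeasureTheory.setIntegral_mono_on hfint hgint measurableSet_Ici ?_
    intro y _; exact hpt y
  have hval : ∫ y in Set.Ici a, Real.exp (-(2 * (1 - s)) * y) / lam₀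
      = Real.exp (-(2 * (1 - s)) * a) / (2 * (1 - s)) / lam₀ := by
    rw [MeasureTheory.integral_Ici_eq_integral_Ioi,
      MeasureTheory.integral_div, integral_exp_neg_mul_Ioi' hb]
  -- bound on exponent
  have hA : Real.pi ^ 2 / (4 * (1 - s) * κ ^ 2) ≤ ((⌈Real.pi ^ 2 / (4 * (1 - s) * κ ^ 2)⌉ : ℤ) : ℝ) :=
    Int.le_ceil _
  have hexp : -Real.pi ^ 2 / (2 * κ) ≥ -(2 * (1 - s)) * a := by
    have hκ2 : (0:ℝ) < κ ^ 2 := by positivity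
    have : Real.pi ^ 2 / (2 * κ) ≤ (2 * (1 - s)) * a := by
      rw [ha, div_le_iff₀ (by positivity)]
      have := (div_le_iff₀ (by positivity)).mp hA
      nlinarith
    rw [ge_iff_le, neg_div, neg_mul, neg_le_neg_iff]; exact this
  have hexple : Real.exp (-(2 * (1 - s)) * a) ≤ Real.exp (-Real.pi ^ 2 / (2 * κ)) :=
    Real.exp_le_exp.mpr hexp
  calc (2 * Real.sin (Real.pi * s) / Real.pi) *
        ∫ y in Set.Ici a, Real.exp (2 * s * y) * (1 + Real.exp (2 * y) * lam)⁻¹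
      ≤ (2 * Real.sin (Real.pi * s) / Real.pi) *
        (Real.exp (-(2 * (1 - s)) * a) / (2 * (1 - s)) / lam₀) := by
        rw [← hval]
        exact mul_le_mul_of_nonneg_left hmono (by positivity)
    _ = (Real.sin (Real.pi * s) / (Real.pi * (1 - s) * lam₀)) * Real.exp (-(2 * (1 - s)) * a) := by
        field_simp
    _ ≤ (Real.sin (Real.pi * s) / (Real.pi * (1 - s) * lam₀)) * Real.exp (-Real.pi ^ 2 / (2 * κ)) := by
        apply mul_le_mul_of_nonneg_left hexple
        positivity
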